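/- Let M be a smooth finite-dimensional manifold, x ∈ M, and s : M → M a smooth diffeomorphism with s(x) = x whose differential at x equals −id on T_xM. Then for all smooth vector fields X, Y on M and every smooth function f on M, (1/2)[X, fY + s_*(fY)]_x = (X_x f)·Y_x + f(x)·(1/2)[X, Y + s_*Y]_x; that is, the operator (∇_X Y)_x := (1/2)[X, Y + s_*Y]_x satisfies the Leibniz rule in its second argument. -/

import Mathlib

open scoped Manifold
local notation "∞" => (⊤ : ℕ∞)

/-- The pushforward of a vector field (viewed, as is standard, as a derivation of the
algebra of smooth functions) along a diffeomorphism `s` with smooth inverse `sinv`: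
`(s_*Y) f = (Y (f ∘ s)) ∘ s⁻¹`. -/
noncomputable def pushforwardVF
    {E : Type*} [NormedAddCommGroup E] [NormedSpace ℝ E]
    {H : Type*} [TopologicalSpace H] {I : ModelWithCorners ℝ E H}
    {M : Type*} [TopologicalSpace M] [ChartedSpace H M]
    (s sinv : C^∞⟮I, M; I, M⟯) (hs : ∀ z : M, s (sinv z) = z)
    (Y : Derivation ℝ C^∞⟮I, M; ℝ⟯ C^∞⟮I, M; ℝ⟯) :
    Derivation ℝ C^∞⟮I, M; ℝ⟯ C^∞⟮I, M; ℝ⟯ :=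
  Derivation.mk'
    { toFun := fun f => (Y (f.comp s)).comp sinv
      map_add' := fun f g => by
        show (Y ((f + g).comp s)).comp sinv
            = (Y (f.comp s)).comp sinv + (Y (g.comp s)).comp sinv
        rw [ContMDiffMap.add_comp, map_add, ContMDiffMap.add_comp]
      map_smul' := fun c f => by
        show (Y ((c • f).comp s)).comp sinv = c • (Y (f.comp s)).comp sinv
        rw [ContMDiffMap.smul_comp, Derivation.map_smul, ContMDiffMap.smul_comp] }
    (fun f g => by
      show (Y ((f * g).comp s)).comp sinv
          = f • (Y (g.comp s)).comp sinv + g • (Y (f.comp s)).comp sinv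
      rw [ContMDiffMap.mul_comp, Derivation.leibniz]
      ext z
      simp [hs z])

/-- (Leibniz part of Proposition 1.3.) Let `M` be a smooth
finite-dimensional manifold, `x ∈ M`, and `s` a smooth diffeomorphism of `M` (with
smooth inverse `sinv`) such that `s x = x` and whose differential at `x` is `-id`
on `T_xM`. Then for all smooth vector fields `X, Y` and every smooth function `f`,
`(1/2)[X, fY + s_*(fY)]_x = (X_x f)·Y_x + f(x)·(1/2)[X, Y + s_*Y]_x`. -/
theorem statement1
    {E : Type*} [NormedAddCommGroup E] [NormedSpace ℝ E] [FiniteDimensional ℝ E]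
    {H : Type*} [TopologicalSpace H] {I : ModelWithCorners ℝ E H} [I.Boundaryless]
    {M : Type*} [TopologicalSpace M] [ChartedSpace H M] [IsManifold I (⊤ : ℕ∞) M]
    [T2Space M]
    (x : M) (s sinv : C^∞⟮I, M; I, M⟯)
    (hinv : ∀ z : M, s (sinv z) = z) (hinv' : ∀ z : M, sinv (s z) = z)
    (hsx : s x = x)
    (hds : ∀ v : PointDerivation I x, 𝒅ₕ hsx v = -v) :
    ∀ (X Y : Derivation ℝ C^∞⟮I, M; ℝ⟯ C^∞⟮I, M; ℝ⟯) (f : C^∞⟮I, M; ℝ⟯),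
      (1/2 : ℝ) • Derivation.evalAt x ⁅X, f • Y + pushforwardVF s sinv hinv (f • Y)⁆
        = (Derivation.evalAt x X f) • Derivation.evalAt x Y
          + f x • ((1/2 : ℝ) •
              Derivation.evalAt x ⁅X, Y + pushforwardVF s sinv hinv Y⁆) := by
  intro X Y f
  have hsinvx : sinv x = x := by rw [← hsx, hinv', hsx]
  have keyS : ∀ (D : Derivation ℝ C^∞⟮I, M; ℝ⟯ C^∞⟮I, M; ℝ⟯) (h : C^∞⟮I, M; ℝ⟯),
      (D (h.comp s)) x = - (D h) x := by
    intro D h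
    have := congrArg (fun v => v h) (hds (Derivation.evalAt x D))
    exact this
  have keySinv : ∀ (D : Derivation ℝ C^∞⟮I, M; ℝ⟯ C^∞⟮I, M; ℝ⟯) (h : C^∞⟮I, M; ℝ⟯),
      (D (h.comp sinv)) x = - (D h) x := by
    intro D h
    have e : (h.comp sinv).comp s = h := by ext z; simp [hinv' z]
    have := keyS D (h.comp sinv)
    rw [e] at this; linarith
  have hP : ∀ (Z : Derivation ℝ C^∞⟮I, M; ℝ⟯ C^∞⟮I, M; ℝ⟯) (h : C^∞⟮I, M; ℝ⟯),
      pushforwardVF s sinv hinv Z h = (Z (h.comp s)).comp sinv := fun _ _ => rfl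
  refine Derivation.ext fun (g : C^∞⟮I, M; ℝ⟯) => ?_
  change (1/2:ℝ) * (⁅X, f • Y + pushforwardVF s sinv hinv (f • Y)⁆ g) x
    = (X f) x * (Y g) x + f x * ((1/2:ℝ) * (⁅X, Y + pushforwardVF s sinv hinv Y⁆ g) x)
  simp only [Derivation.commutator_apply, map_add, Derivation.add_apply, Derivation.smul_apply,
    Derivation.evalAt_apply, hP, Derivation.leibniz, smul_eq_mul]
  simp only [Derivation.leibniz, keySinv, smul_eq_mul, ContMDiffMap.coe_add, ContMDiffMap.coe_mul,
    ContMDiffMap.coe_sub, Pi.add_apply, Pi.mul_apply, Pi.sub_apply, Pi.neg_apply, map_add,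
    Derivation.add_apply, ContMDiffMap.comp_apply, hsinvx]
  rw [keyS Y g, keyS Y (X g)]
  ring
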